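/- Suppose 1 < p < ∞ and ‖θ‖_{p,*} ≤ α₁ + α₂. Then sup over x ∈ ℝⁿ of (f(⟨θ, x⟩) − α₁‖x₁ − x‖_p − α₂‖x₂ − x‖_p) ≤ f((min(α₁,α₂)·‖θ‖_{p,*}·‖x₁−x₂‖_p + ⟨θ, α₁x₁ + α₂x₂⟩)/(α₁+α₂)) − min(α₁,α₂)·‖x₁−x₂‖_p, where f(t) = log(1+exp(t)). -/

import Mathlib

noncomputable def pnorm {n : ℕ} (p : ℝ) (v : Fin n → ℝ) : ℝ :=
  (∑ i, |v i| ^ p) ^ (1 / p)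

def dot {n : ℕ} (v w : Fin n → ℝ) : ℝ := ∑ i, v i * w i

section aux

variable {n : ℕ} {p : ℝ}

lemma pnorm_nonneg (p : ℝ) (v : Fin n → ℝ) : 0 ≤ pnorm p v :=
  Real.rpow_nonneg (Finset.sum_nonneg fun i _ => Real.rpow_nonneg (abs_nonneg _) _) _

lemma pnorm_neg (p : ℝ) (v : Fin n → ℝ) : pnorm p (-v) = pnorm p v := by
  simp [pnorm, abs_neg]

lemma pnorm_smul (hp : 0 < p) (c : ℝ) (v : Fin n → ℝ) :
    pnorm p (c • v) = |c| * pnorm p (v) := by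
  unfold pnorm
  have h1 : ∀ i : Fin n, |(c • v) i| ^ p = |c| ^ p * |v i| ^ p := fun i => by
    rw [Pi.smul_apply, smul_eq_mul, abs_mul, Real.mul_rpow (abs_nonneg _) (abs_nonneg _)]
  simp only [h1, ← Finset.mul_sum]
  rw [Real.mul_rpow (Real.rpow_nonneg (abs_nonneg _) _)
    (Finset.sum_nonneg fun i _ => Real.rpow_nonneg (abs_nonneg _) _),
    ← Real.rpow_mul (abs_nonneg _), mul_one_div, div_self hp.ne', Real.rpow_one]

lemma pnorm_add_le (hp : 1 ≤ p) (u v : Fin n → ℝ) :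
    pnorm p (u + v) ≤ pnorm p u + pnorm p v := by
  simpa [pnorm] using Real.Lp_add_le Finset.univ u v hp

lemma pnorm_sub_le (hp : 1 ≤ p) (u v w : Fin n → ℝ) :
    pnorm p (u - w) ≤ pnorm p (u - v) + pnorm p (v - w) := by
  have h : u - w = (u - v) + (v - w) := by abel
  rw [h]; exact pnorm_add_le hp _ _

lemma dot_add' (u v w : Fin n → ℝ) : dot u (v + w) = dot u v + dot u w := by
  simp [dot, mul_add, Finset.sum_add_distrib]

lemma dot_smul' (c : ℝ) (u v : Fin n → ℝ) : dot u (c • v) = c * dot u v := by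
  simp only [dot, Pi.smul_apply, smul_eq_mul, Finset.mul_sum]
  exact Finset.sum_congr rfl fun i _ => by ring

lemma dot_le_pnorm_mul_pnorm {r : ℝ} (hrp : r.HolderConjugate p) (u v : Fin n → ℝ) :
    dot u v ≤ pnorm r u * pnorm p v :=
  Real.inner_le_Lp_mul_Lq Finset.univ u v hrp

end aux

lemma softplus_mono {a b : ℝ} (h : a ≤ b) :
    Real.log (1 + Real.exp a) ≤ Real.log (1 + Real.exp b) := by
  apply Real.log_le_log (by positivity)
  have := Real.exp_le_exp.2 h
  linarith

lemma softplus_lipschitz {a b : ℝ} (h : a ≤ b) :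
    Real.log (1 + Real.exp b) - Real.log (1 + Real.exp a) ≤ b - a := by
  have key : ∀ t : ℝ, Real.log (1 + Real.exp t) - t = Real.log (1 + Real.exp (-t)) := by
    intro t
    have hpos : (0:ℝ) < 1 + Real.exp (-t) := by positivity
    have h : 1 + Real.exp t = Real.exp t * (1 + Real.exp (-t)) := by
      rw [mul_add, mul_one, ← Real.exp_add]
      simp [add_comm]
    rw [h, Real.log_mul (Real.exp_ne_zero _) hpos.ne', Real.log_exp]
    ring
  have h1 : Real.log (1 + Real.exp b) - b ≤ Real.log (1 + Real.exp a) - a := by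
    rw [key a, key b]
    apply Real.log_le_log (by positivity)
    have := Real.exp_le_exp.2 (neg_le_neg h)
    linarith
  linarith

theorem stmt_14 (n : ℕ) (p r α₁ α₂ : ℝ) (hp : 1 < p) (hpr : 1 / p + 1 / r = 1)
    (hα₁ : 0 < α₁) (hα₂ : 0 < α₂)
    (x₁ x₂ θ : Fin n → ℝ) (hθ : pnorm r θ ≤ α₁ + α₂) :
    ∀ x : Fin n → ℝ,
      Real.log (1 + Real.exp (dot θ x)) - α₁ * pnorm p (x₁ - x) - α₂ * pnorm p (x₂ - x) ≤
        Real.log (1 + Real.exp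
            ((min α₁ α₂ * pnorm r θ * pnorm p (x₁ - x₂) + dot θ (α₁ • x₁ + α₂ • x₂)) /
              (α₁ + α₂))) -
          min α₁ α₂ * pnorm p (x₁ - x₂) := by
  intro x
  have hp0 : 0 < p := lt_trans zero_lt_one hp
  have hpr' : p.HolderConjugate r := Real.holderConjugate_iff.mpr ⟨hp, by rw [← one_div, ← one_div]; exact hpr⟩
  have hrp : r.HolderConjugate p := hpr'.symm
  have hA : 0 < α₁ + α₂ := by linarith
  set A := α₁ + α₂ with hAdef
  set s := pnorm r θ with hs
  set a := pnorm p (x₁ - x) with ha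
  set b := pnorm p (x₂ - x) with hb
  set d := pnorm p (x₁ - x₂) with hd
  set m := min α₁ α₂ with hm
  set c := dot θ (α₁ • x₁ + α₂ • x₂) with hc
  have hs0 : 0 ≤ s := pnorm_nonneg r θ
  have ha0 : 0 ≤ a := pnorm_nonneg p _
  have hb0 : 0 ≤ b := pnorm_nonneg p _
  have hd0 : 0 ≤ d := pnorm_nonneg p _
  have hm0 : 0 < m := lt_min hα₁ hα₂
  have step1 : dot θ x ≤ (s * (α₁ * a + α₂ * b) + c) / A := by
    have hdec : x = A⁻¹ • (α₁ • (x - x₁) + α₂ • (x - x₂)) + A⁻¹ • (α₁ • x₁ + α₂ • x₂) := by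
      funext i
      simp only [Pi.add_apply, Pi.smul_apply, Pi.sub_apply, smul_eq_mul]
      field_simp
      ring
    have h1 : dot θ x = A⁻¹ * dot θ (α₁ • (x - x₁) + α₂ • (x - x₂)) + A⁻¹ * c := by
      conv_lhs => rw [hdec]
      rw [dot_add', dot_smul', dot_smul']
    have h2 : dot θ (α₁ • (x - x₁) + α₂ • (x - x₂)) ≤ s * (α₁ * a + α₂ * b) := by
      calc dot θ (α₁ • (x - x₁) + α₂ • (x - x₂))
          ≤ s * pnorm p (α₁ • (x - x₁) + α₂ • (x - x₂)) :=
            dot_le_pnorm_mul_pnorm hrp _ _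
        _ ≤ s * (α₁ * a + α₂ * b) := by
            apply mul_le_mul_of_nonneg_left _ hs0
            calc pnorm p (α₁ • (x - x₁) + α₂ • (x - x₂))
                ≤ pnorm p (α₁ • (x - x₁)) + pnorm p (α₂ • (x - x₂)) :=
                  pnorm_add_le hp.le _ _
              _ = α₁ * pnorm p (x - x₁) + α₂ * pnorm p (x - x₂) := by
                  rw [pnorm_smul hp0, pnorm_smul hp0, abs_of_pos hα₁, abs_of_pos hα₂]
              _ = α₁ * a + α₂ * b := by
                  rw [ha, hb, ← pnorm_neg p (x - x₁), ← pnorm_neg p (x - x₂)]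
                  norm_num
    have hAinv : (0:ℝ) ≤ A⁻¹ := by positivity
    calc dot θ x = A⁻¹ * dot θ (α₁ • (x - x₁) + α₂ • (x - x₂)) + A⁻¹ * c := h1
      _ ≤ A⁻¹ * (s * (α₁ * a + α₂ * b)) + A⁻¹ * c :=
          add_le_add_left (mul_le_mul_of_nonneg_left h2 hAinv) _
      _ = (s * (α₁ * a + α₂ * b) + c) / A := by field_simp
  have hdab : d ≤ a + b := by
    have h := pnorm_sub_le (n := n) hp.le x₁ x x₂
    rw [← ha, ← hd] at h
    have hb' : pnorm p (x - x₂) = b := by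
      rw [hb, ← pnorm_neg p (x - x₂)]; norm_num
    rw [hb'] at h
    exact h
  have step2 : m * d ≤ α₁ * a + α₂ * b := by
    calc m * d ≤ m * (a + b) := mul_le_mul_of_nonneg_left hdab hm0.le
      _ = m * a + m * b := by ring
      _ ≤ α₁ * a + α₂ * b :=
          add_le_add (mul_le_mul_of_nonneg_right (min_le_left _ _) ha0)
            (mul_le_mul_of_nonneg_right (min_le_right _ _) hb0)
  set t := α₁ * a + α₂ * b with ht
  have hmono := softplus_mono step1
  have harg : (s * (m * d) + c) / A ≤ (s * t + c) / A := by
    gcongr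
  have hlip := softplus_lipschitz harg
  have hgap : (s * t + c) / A - (s * (m * d) + c) / A ≤ t - m * d := by
    have h1 : (s * t + c) / A - (s * (m * d) + c) / A = s / A * (t - m * d) := by
      field_simp
      ring
    rw [h1]
    have h2 : s / A ≤ 1 := (div_le_one hA).2 hθ
    have h3 : 0 ≤ t - m * d := sub_nonneg.2 step2
    nlinarith
  have hargeq : (m * s * d + c) / A = (s * (m * d) + c) / A := by ring_nf
  rw [hargeq]
  have : Real.log (1 + Real.exp (dot θ x)) ≤ Real.log (1 + Real.exp ((s * t + c) / A)) :=
    hmono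
  linarith
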